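/- Let q ∈ L^1 be supported in Ω = [-T_-,T_+] and let b(ζ) be the scattering coefficient of the Zakharov–Shabat problem with potential q and r = -q*. Then |b(ζ)| ≤ sinh(κ) e^{2T_+ Im ζ} for ζ in the closed upper half-plane, and |b(ζ)| ≤ sinh(κ) e^{-2T_- Im ζ} for ζ in the open lower half-plane, where κ = ‖q‖_{L^1(Ω)}. -/

import Mathlib

open MeasureTheory Complex Set Filter

lemma key_int_le (Q : ℝ → ℝ) (hQi : Integrable Q) (hQ0 : ∀ s, 0 ≤ Q s)
    (a : ℝ) (K : ℝ → ℝ) (hKdef : ∀ s, K s = ∫ σ in a..s, Q σ)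
    (g G : ℝ → ℝ) (hg : Continuous g) (hG : ∀ x, HasDerivAt G (g x) x)
    (t : ℝ) (hat : a ≤ t) :
    ∫ s in a..t, g (K s) * Q s ≤ G (K t) - G 0 := by
  have hQI : ∀ x y : ℝ, IntervalIntegrable Q volume x y := fun x y => hQi.intervalIntegrable
  have hKcont : Continuous K := by
    have h := hQi.continuous_primitive a
    have : K = fun b => ∫ x in a..b, Q x := funext hKdef
    rw [this]; exact h
  have hKa : K a = 0 := by rw [hKdef]; exact intervalIntegral.integral_same
  have hdiff : ∀ x y : ℝ, K y - K x = ∫ σ in x..y, Q σ := by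
    intro x y
    rw [hKdef, hKdef, ← intervalIntegral.integral_add_adjacent_intervals (hQI a x) (hQI x y)]
    ring
  have hKmono : Monotone K := by
    intro x y hxy
    have h0 : 0 ≤ ∫ σ in x..y, Q σ := intervalIntegral.integral_nonneg hxy fun u _ => hQ0 u
    have := hdiff x y; linarith
  obtain ⟨R, hR⟩ : ∃ R, ∀ s, |K s| ≤ R := by
    refine ⟨∫ u, Q u, fun s => ?_⟩
    rw [hKdef]
    rw [← Real.norm_eq_abs]
    calc ‖∫ σ in a..s, Q σ‖ ≤ ∫ σ in Set.uIoc a s, ‖Q σ‖ :=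
          intervalIntegral.norm_integral_le_integral_norm_uIoc
      _ = ∫ σ in Set.uIoc a s, Q σ :=
          integral_congr_ae (ae_of_all _ fun σ => by
            show ‖Q σ‖ = Q σ
            rw [Real.norm_eq_abs, _root_.abs_of_nonneg (hQ0 σ)])
      _ ≤ ∫ u, Q u := setIntegral_le_integral hQi (ae_of_all _ hQ0)
  have hgK : Continuous fun s => g (K s) := hg.comp hKcont
  obtain ⟨M, hM⟩ : ∃ M, ∀ s, ‖g (K s)‖ ≤ M := by
    obtain ⟨M, hM⟩ := (isCompact_Icc (a := -R) (b := R)).exists_bound_of_continuousOn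
      hg.continuousOn
    exact ⟨M, fun s => hM _ (abs_le.mp (hR s))⟩
  have hhint : Integrable (fun s => g (K s) * Q s) := hQi.bdd_mul hgK.aestronglyMeasurable (ae_of_all _ hM)
  set Φ : ℝ → ℝ := fun τ => (∫ s in a..τ, g (K s) * Q s) - (G (K τ) - G 0) with hΦdef
  have hGcont : Continuous G := by
    have hdG : Differentiable ℝ G := fun x => (hG x).differentiableAt
    exact hdG.continuous
  have hΦcont : Continuous Φ :=
    (hhint.continuous_primitive a).sub ((hGcont.comp hKcont).sub continuous_const)
  have main : ∀ ε > (0:ℝ), Φ t ≤ ε * K t := by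
    intro ε hε
    set S : Set ℝ := {τ | Φ τ ≤ ε * K τ} with hSdef
    have hScl : IsClosed S := isClosed_le hΦcont (continuous_const.mul hKcont)
    have haS : a ∈ S := by
      simp only [hSdef, mem_setOf_eq, hΦdef, hKa, intervalIntegral.integral_same]
      simp
    have hsub : Icc a t ⊆ S := by
      refine IsClosed.Icc_subset_of_forall_exists_gt (hScl.inter isClosed_Icc) haS ?_
      rintro x ⟨hxS, hxI⟩ y hy
      obtain ⟨δ₁, hδ₁pos, hδ₁⟩ := Metric.continuousAt_iff.mp hg.continuousAt (ε/2) (by linarith)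
      obtain ⟨δ₂, hδ₂pos, hδ₂⟩ := Metric.continuousAt_iff.mp hKcont.continuousAt δ₁ hδ₁pos
      set z := min y (x + δ₂/2) with hz
      have hxz : x < z := lt_min hy (by linarith)
      have hzy : z ≤ y := min_le_left _ _
      have hzx2 : z - x < δ₂ := by
        have : z ≤ x + δ₂/2 := min_le_right _ _
        linarith
      have hKz : |K z - K x| < δ₁ := by
        have hd : dist z x < δ₂ := by rw [Real.dist_eq, _root_.abs_of_nonneg (by linarith)]; exact hzx2
        have := hδ₂ hd
        rwa [Real.dist_eq] at this
      have hKxz : K x ≤ K z := hKmono hxz.le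
      have hpt : ∀ s ∈ Icc x z, g (K s) * Q s ≤ (g (K x) + ε/2) * Q s := by
        intro s hs
        have hds : dist s x < δ₂ := by
          rw [Real.dist_eq, _root_.abs_of_nonneg (by linarith [hs.1])]
          linarith [hs.2]
        have h2 := hδ₁ (hδ₂ hds)
        rw [Real.dist_eq] at h2
        have := abs_lt.mp h2
        exact mul_le_mul_of_nonneg_right (by linarith [this.2]) (hQ0 s)
      have hI1 : ∫ s in x..z, g (K s) * Q s ≤ (g (K x) + ε/2) * (K z - K x) := by
        calc ∫ s in x..z, g (K s) * Q s ≤ ∫ s in x..z, (g (K x) + ε/2) * Q s :=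
              intervalIntegral.integral_mono_on hxz.le hhint.intervalIntegrable
                ((hQI x z).const_mul _) hpt
          _ = (g (K x) + ε/2) * (K z - K x) := by
              rw [intervalIntegral.integral_const_mul, ← hdiff]
      have hI2 : (g (K x) - ε/2) * (K z - K x) ≤ G (K z) - G (K x) := by
        have hfund : G (K z) - G (K x) = ∫ w in (K x)..(K z), g w :=
          (intervalIntegral.integral_eq_sub_of_hasDerivAt (fun w _ => hG w)
            (hg.intervalIntegrable _ _)).symm
        have hptw : ∀ w ∈ Icc (K x) (K z), g (K x) - ε/2 ≤ g w := by
          intro w hw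
          have hd : dist w (K x) < δ₁ := by
            rw [Real.dist_eq, _root_.abs_of_nonneg (by linarith [hw.1])]
            have := (abs_lt.mp hKz).2
            linarith [hw.2]
          have h2 := hδ₁ hd
          rw [Real.dist_eq] at h2
          have := abs_lt.mp h2
          linarith [this.1]
        calc (g (K x) - ε/2) * (K z - K x)
            = ∫ _ in (K x)..(K z), (g (K x) - ε/2) := by
              rw [intervalIntegral.integral_const, smul_eq_mul]; ring
          _ ≤ ∫ w in (K x)..(K z), g w :=
              intervalIntegral.integral_mono_on hKxz intervalIntegrable_const
                (hg.intervalIntegrable _ _) hptw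
          _ = G (K z) - G (K x) := hfund.symm
      have hsplit : Φ z = Φ x + ((∫ s in x..z, g (K s) * Q s) - (G (K z) - G (K x))) := by
        simp only [hΦdef]
        rw [← intervalIntegral.integral_add_adjacent_intervals
          (hhint.intervalIntegrable (a := a) (b := x)) (hhint.intervalIntegrable (a := x) (b := z))]
        ring
      have hcomb : (g (K x) + ε/2) * (K z - K x) - (g (K x) - ε/2) * (K z - K x)
          = ε * (K z - K x) := by ring
      have hxSv : Φ x ≤ ε * K x := hxS
      have hzS : Φ z ≤ ε * K z := by
        rw [hsplit]
        nlinarith [hI1, hI2]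
      exact ⟨z, hzS, hxz, hzy⟩
    exact hsub (right_mem_Icc.mpr hat)
  have hKt0 : 0 ≤ K t := by
    have h := hdiff a t
    have h0 : 0 ≤ ∫ σ in a..t, Q σ := intervalIntegral.integral_nonneg hat fun u _ => hQ0 u
    rw [hKa] at h; linarith
  have hΦt : Φ t ≤ 0 := by
    by_contra h
    push_neg at h
    have h1 := main (Φ t / (2 * (K t + 1))) (by positivity)
    rw [div_mul_eq_mul_div, le_div_iff₀ (by positivity)] at h1
    nlinarith
  have := sub_nonpos.mp hΦt
  linarith [this]

/-- For `q ∈ L¹` supported in `Ω = [-T₋,T₊]`, the Zakharov–Shabat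
scattering coefficient `b(ζ)` (read off from the Jost solution
`φ = (A e^{-iζt}, B e^{iζt})` with `A(-T₋)=1`, `B(-T₋)=0`, `b(ζ) = B(T₊)`)
satisfies `|b(ζ)| ≤ sinh(κ) e^{2T₊ Im ζ}` for `Im ζ ≥ 0` and
`|b(ζ)| ≤ sinh(κ) e^{-2T₋ Im ζ}` for `Im ζ < 0`, where `κ = ‖q‖_{L¹(Ω)}`. -/
theorem b_coefficient_exponential_bound
    (Tm Tp : ℝ) (hTm : 0 ≤ Tm) (hTp : 0 ≤ Tp)
    (q : ℝ → ℂ) (hq : Integrable q)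
    (hsupp : Function.support q ⊆ Icc (-Tm) Tp)
    (r : ℝ → ℂ) (hr : ∀ t, r t = -(starRingEnd ℂ) (q t))
    (ζ : ℂ)
    (A B : ℝ → ℂ)
    (hA : ∀ t, HasDerivAt A (q t * B t * Complex.exp (2 * Complex.I * ζ * t)) t)
    (hB : ∀ t, HasDerivAt B (r t * A t * Complex.exp (-(2 * Complex.I * ζ * t))) t)
    (hA0 : A (-Tm) = 1) (hB0 : B (-Tm) = 0)
    (b : ℂ) (hb : b = B Tp)
    (κ : ℝ) (hκ : κ = ∫ t in Icc (-Tm) Tp, ‖q t‖) :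
    (0 ≤ ζ.im → ‖b‖ ≤ Real.sinh κ * Real.exp (2 * Tp * ζ.im))
    ∧ (ζ.im < 0 → ‖b‖ ≤ Real.sinh κ * Real.exp (-(2 * Tm * ζ.im))) := by
  have haT : (-Tm) ≤ Tp := by linarith
  set Q : ℝ → ℝ := fun s => ‖q s‖ with hQdef
  have hQi : Integrable Q := hq.norm
  have hQ0 : ∀ s, 0 ≤ Q s := fun s => norm_nonneg _
  set K : ℝ → ℝ := fun s => ∫ σ in (-Tm)..s, Q σ with hKdef'
  have hKdef : ∀ s, K s = ∫ σ in (-Tm)..s, Q σ := fun s => rfl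
  have hKcont : Continuous K := hQi.continuous_primitive (-Tm)
  have hAcont : Continuous A := by
    have hd : Differentiable ℝ A := fun s => (hA s).differentiableAt
    exact hd.continuous
  have hBcont : Continuous B := by
    have hd : Differentiable ℝ B := fun s => (hB s).differentiableAt
    exact hd.continuous
  have hrq : ∀ s, ‖r s‖ = ‖q s‖ := fun s => by rw [hr]; simp
  have hri : Integrable r := by
    have hmeas : AEStronglyMeasurable r volume := by
      have hre : r = fun t => -(starRingEnd ℂ) (q t) := funext hr
      rw [hre]
      simp only [starRingEnd_apply]
      exact (continuous_star.comp_aestronglyMeasurable hq.aestronglyMeasurable).neg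
    exact hq.mono hmeas (ae_of_all _ fun s => le_of_eq (hrq s))
  have hexp1 : ∀ s : ℝ, ‖Complex.exp (-(2*Complex.I*ζ*s))‖ = Real.exp (2*ζ.im*s) := by
    intro s
    rw [Complex.norm_exp]
    congr 1
    simp [Complex.mul_re, Complex.mul_im]
  have hexp2 : ∀ s : ℝ, ‖Complex.exp (2*Complex.I*ζ*s)‖ = Real.exp (-(2*ζ.im*s)) := by
    intro s
    rw [Complex.norm_exp]
    congr 1
    simp [Complex.mul_re, Complex.mul_im]
  have hcexp1 : Continuous fun s : ℝ => Complex.exp (-(2*Complex.I*ζ*(s:ℂ))) := by fun_prop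
  have hcexp2 : Continuous fun s : ℝ => Complex.exp (2*Complex.I*ζ*(s:ℂ)) := by fun_prop
  have hfBint : ∀ x y : ℝ, IntervalIntegrable
      (fun s : ℝ => r s * A s * Complex.exp (-(2*Complex.I*ζ*s))) volume x y := by
    intro x y
    have h := (hri.intervalIntegrable (a := x) (b := y)).mul_continuousOn
      ((hAcont.mul hcexp1).continuousOn)
    simpa [mul_assoc] using h
  have hfAint : ∀ x y : ℝ, IntervalIntegrable
      (fun s : ℝ => q s * B s * Complex.exp (2*Complex.I*ζ*s)) volume x y := by
    intro x y
    have h := (hq.intervalIntegrable (a := x) (b := y)).mul_continuousOn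
      ((hBcont.mul hcexp2).continuousOn)
    simpa [mul_assoc] using h
  have hBeq : ∀ t : ℝ, B t = ∫ s in (-Tm)..t, r s * A s * Complex.exp (-(2*Complex.I*ζ*s)) := by
    intro t
    have h1 := intervalIntegral.integral_eq_sub_of_hasDerivAt (fun s _ => hB s) (hfBint (-Tm) t)
    rw [hB0, sub_zero] at h1
    exact h1.symm
  have hAeq : ∀ t : ℝ, A t = 1 + ∫ s in (-Tm)..t, q s * B s * Complex.exp (2*Complex.I*ζ*s) := by
    intro t
    have h1 := intervalIntegral.integral_eq_sub_of_hasDerivAt (fun s _ => hA s) (hfAint (-Tm) t)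
    rw [hA0] at h1
    rw [h1]; ring
  set m1 : ℝ := max ζ.im 0 with hm1def
  set m2 : ℝ := max (-ζ.im) 0 with hm2def
  have hm1 : 0 ≤ m1 := le_max_right _ _
  have hm2 : 0 ≤ m2 := le_max_right _ _
  have hmm : ζ.im = m1 - m2 := by
    rcases le_total 0 ζ.im with h | h
    · rw [hm1def, hm2def, max_eq_left h, max_eq_right (by linarith)]; ring
    · rw [hm1def, hm2def, max_eq_right h, max_eq_left (by linarith)]; ring
  set ut : ℝ → ℝ := fun s => ‖A s‖ * Real.exp (-(2*m2*(s+Tm))) with hutdef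
  set vt : ℝ → ℝ := fun s => ‖B s‖ * Real.exp (-(2*m1*s + 2*m2*Tm)) with hvtdef
  have hutcont : Continuous ut := hAcont.norm.mul (by fun_prop)
  have hvtcont : Continuous vt := hBcont.norm.mul (by fun_prop)
  have hut0 : ∀ s, 0 ≤ ut s := fun s => mul_nonneg (norm_nonneg _) (Real.exp_pos _).le
  have hvt0 : ∀ s, 0 ≤ vt s := fun s => mul_nonneg (norm_nonneg _) (Real.exp_pos _).le
  have hQut : ∀ x y : ℝ, IntervalIntegrable (fun s => Q s * ut s) volume x y := fun x y =>
    (hQi.intervalIntegrable).mul_continuousOn hutcont.continuousOn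
  have hQvt : ∀ x y : ℝ, IntervalIntegrable (fun s => Q s * vt s) volume x y := fun x y =>
    (hQi.intervalIntegrable).mul_continuousOn hvtcont.continuousOn
  -- the two weighted Volterra inequalities
  have hv : ∀ t ∈ Icc (-Tm) Tp, vt t ≤ ∫ s in (-Tm)..t, Q s * ut s := by
    intro t ht
    have hnorm : ‖B t‖ ≤ ∫ s in (-Tm)..t, Q s * (‖A s‖ * Real.exp (2*ζ.im*s)) := by
      rw [hBeq t]
      calc ‖∫ s in (-Tm)..t, r s * A s * Complex.exp (-(2*Complex.I*ζ*s))‖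
          ≤ ∫ s in (-Tm)..t, ‖r s * A s * Complex.exp (-(2*Complex.I*ζ*s))‖ :=
            intervalIntegral.norm_integral_le_integral_norm ht.1
        _ = ∫ s in (-Tm)..t, Q s * (‖A s‖ * Real.exp (2*ζ.im*s)) := by
            apply intervalIntegral.integral_congr
            intro s _
            beta_reduce
            rw [norm_mul, norm_mul, hrq, hexp1]
            ring
    have step1 : vt t ≤ ∫ s in (-Tm)..t,
        Q s * (‖A s‖ * Real.exp (2*ζ.im*s)) * Real.exp (-(2*m1*t + 2*m2*Tm)) := by
      rw [intervalIntegral.integral_mul_const]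
      exact mul_le_mul_of_nonneg_right hnorm (Real.exp_pos _).le
    refine step1.trans (intervalIntegral.integral_mono_on ht.1 ?_ (hQut _ _) ?_)
    · exact ((hQi.intervalIntegrable).mul_continuousOn
        ((hAcont.norm.mul (by fun_prop)).continuousOn)).mul_const _
    · intro s hs
      have key : Real.exp (2*ζ.im*s) * Real.exp (-(2*m1*t + 2*m2*Tm))
          ≤ Real.exp (-(2*m2*(s+Tm))) := by
        rw [← Real.exp_add, Real.exp_le_exp, hmm]
        nlinarith [mul_le_mul_of_nonneg_left hs.2 hm1]
      calc Q s * (‖A s‖ * Real.exp (2*ζ.im*s)) * Real.exp (-(2*m1*t + 2*m2*Tm))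
          = (Real.exp (2*ζ.im*s) * Real.exp (-(2*m1*t + 2*m2*Tm))) * (Q s * ‖A s‖) := by ring
        _ ≤ Real.exp (-(2*m2*(s+Tm))) * (Q s * ‖A s‖) :=
            mul_le_mul_of_nonneg_right key (mul_nonneg (hQ0 s) (norm_nonneg _))
        _ = Q s * ut s := by simp only [hutdef]; ring
  have hu : ∀ t ∈ Icc (-Tm) Tp, ut t ≤ 1 + ∫ s in (-Tm)..t, Q s * vt s := by
    intro t ht
    have hnorm : ‖A t‖ ≤ 1 + ∫ s in (-Tm)..t, Q s * (‖B s‖ * Real.exp (-(2*ζ.im*s))) := by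
      rw [hAeq t]
      refine (norm_add_le _ _).trans ?_
      simp only [norm_one]
      refine add_le_add_right ?_ 1
      calc ‖∫ s in (-Tm)..t, q s * B s * Complex.exp (2*Complex.I*ζ*s)‖
          ≤ ∫ s in (-Tm)..t, ‖q s * B s * Complex.exp (2*Complex.I*ζ*s)‖ :=
            intervalIntegral.norm_integral_le_integral_norm ht.1
        _ = ∫ s in (-Tm)..t, Q s * (‖B s‖ * Real.exp (-(2*ζ.im*s))) := by
            apply intervalIntegral.integral_congr
            intro s _
            beta_reduce
            rw [norm_mul, norm_mul, hexp2]
            ring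
    have hw1 : Real.exp (-(2*m2*(t+Tm))) ≤ 1 := by
      rw [Real.exp_le_one_iff]
      nlinarith [ht.1]
    have hX0 : 0 ≤ ∫ s in (-Tm)..t, Q s * (‖B s‖ * Real.exp (-(2*ζ.im*s))) :=
      intervalIntegral.integral_nonneg ht.1 (fun s _ => by positivity)
    have step1 : ut t ≤ 1 + ∫ s in (-Tm)..t,
        Q s * (‖B s‖ * Real.exp (-(2*ζ.im*s))) * Real.exp (-(2*m2*(t+Tm))) := by
      rw [intervalIntegral.integral_mul_const]
      have h3 := mul_le_mul_of_nonneg_right hnorm (Real.exp_pos (-(2*m2*(t+Tm)))).le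
      have h4 : (1 + (∫ s in (-Tm)..t, Q s * (‖B s‖ * Real.exp (-(2*ζ.im*s)))))
            * Real.exp (-(2*m2*(t+Tm)))
          ≤ 1 + (∫ s in (-Tm)..t, Q s * (‖B s‖ * Real.exp (-(2*ζ.im*s))))
            * Real.exp (-(2*m2*(t+Tm))) := by nlinarith [Real.exp_pos (-(2*m2*(t+Tm)))]
      exact h3.trans h4
    refine step1.trans (add_le_add_right ?_ 1)
    refine intervalIntegral.integral_mono_on ht.1 ?_ (hQvt _ _) ?_
    · exact ((hQi.intervalIntegrable).mul_continuousOn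
        ((hBcont.norm.mul (by fun_prop)).continuousOn)).mul_const _
    · intro s hs
      have key : Real.exp (-(2*ζ.im*s)) * Real.exp (-(2*m2*(t+Tm)))
          ≤ Real.exp (-(2*m1*s + 2*m2*Tm)) := by
        rw [← Real.exp_add, Real.exp_le_exp, hmm]
        nlinarith [mul_le_mul_of_nonneg_left hs.2 hm2]
      calc Q s * (‖B s‖ * Real.exp (-(2*ζ.im*s))) * Real.exp (-(2*m2*(t+Tm)))
          = (Real.exp (-(2*ζ.im*s)) * Real.exp (-(2*m2*(t+Tm)))) * (Q s * ‖B s‖) := by ring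
        _ ≤ Real.exp (-(2*m1*s + 2*m2*Tm)) * (Q s * ‖B s‖) :=
            mul_le_mul_of_nonneg_right key (mul_nonneg (hQ0 s) (norm_nonneg _))
        _ = Q s * vt s := by simp only [hvtdef]; ring
  -- a uniform bound for ut on the interval
  obtain ⟨C, hC⟩ : ∃ C, ∀ s ∈ Icc (-Tm) Tp, ut s ≤ C := by
    obtain ⟨C, hC⟩ := (isCompact_Icc (a := -Tm) (b := Tp)).exists_bound_of_continuousOn
      hutcont.continuousOn
    exact ⟨C, fun s hs => (le_abs_self _).trans (by simpa [Real.norm_eq_abs] using hC s hs)⟩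
  have hC0 : 0 ≤ C := (hut0 (-Tm)).trans (hC (-Tm) (left_mem_Icc.mpr haT))
  -- instantiations of the key integral lemma
  have hcosh : ∀ t : ℝ, -Tm ≤ t → ∫ s in (-Tm)..t, Real.cosh (K s) * Q s ≤ Real.sinh (K t) := by
    intro t h
    have h1 := key_int_le Q hQi hQ0 (-Tm) K hKdef Real.cosh Real.sinh Real.continuous_cosh
      Real.hasDerivAt_sinh t h
    simpa using h1
  have hsinh : ∀ t : ℝ, -Tm ≤ t →
      ∫ s in (-Tm)..t, Real.sinh (K s) * Q s ≤ Real.cosh (K t) - 1 := by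
    intro t h
    have h1 := key_int_le Q hQi hQ0 (-Tm) K hKdef Real.sinh Real.cosh Real.continuous_sinh
      Real.hasDerivAt_cosh t h
    simpa using h1
  have hpow : ∀ (m : ℕ) (t : ℝ), -Tm ≤ t →
      ∫ s in (-Tm)..t, (K s)^m * Q s ≤ (K t)^(m+1)/((m:ℝ)+1) := by
    intro m t h
    have hd : ∀ x : ℝ, HasDerivAt (fun y : ℝ => y^(m+1)/((m:ℝ)+1)) (x^m) x := by
      intro x
      have h1 := (hasDerivAt_pow (m+1) x).div_const ((m:ℝ)+1)
      refine h1.congr_deriv ?_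
      have hne : ((m:ℝ)+1) ≠ 0 := by positivity
      push_cast
      field_simp
    have h1 := key_int_le Q hQi hQ0 (-Tm) K hKdef (fun y => y^m) (fun y => y^(m+1)/((m:ℝ)+1))
      (continuous_pow m) hd t h
    beta_reduce at h1
    have hz : ((0:ℝ))^(m+1)/((m:ℝ)+1) = 0 := by
      rw [zero_pow (Nat.succ_ne_zero m)]; simp
    rw [hz, sub_zero] at h1
    exact h1
  -- the inductive bound
  have claim : ∀ n : ℕ, ∀ t ∈ Icc (-Tm) Tp,
      ut t ≤ Real.cosh (K t) + C * (K t)^(2*n) / (Nat.factorial (2*n) : ℝ) := by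
    intro n
    induction n with
    | zero =>
      intro t ht
      have h1 := hC t ht
      have h2 := Real.cosh_pos (x := K t)
      norm_num [Nat.factorial]
      linarith
    | succ n ih =>
      have hfactpos : (0:ℝ) < (Nat.factorial (2*n) : ℝ) :=
        Nat.cast_pos.mpr (Nat.factorial_pos _)
      have hfactpos1 : (0:ℝ) < (Nat.factorial (2*n+1) : ℝ) :=
        Nat.cast_pos.mpr (Nat.factorial_pos _)
      have hvn : ∀ t ∈ Icc (-Tm) Tp,
          vt t ≤ Real.sinh (K t) + C * (K t)^(2*n+1) / (Nat.factorial (2*n+1) : ℝ) := by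
        intro t ht
        refine (hv t ht).trans ?_
        have hcont2 : Continuous fun s =>
            Real.cosh (K s) + C * (K s)^(2*n) / (Nat.factorial (2*n) : ℝ) :=
          (Real.continuous_cosh.comp hKcont).add
            ((continuous_const.mul (hKcont.pow _)).div_const _)
        have hmono : ∫ s in (-Tm)..t, Q s * ut s
            ≤ ∫ s in (-Tm)..t,
                Q s * (Real.cosh (K s) + C * (K s)^(2*n) / (Nat.factorial (2*n) : ℝ)) := by
          refine intervalIntegral.integral_mono_on ht.1 (hQut _ _)
            ((hQi.intervalIntegrable).mul_continuousOn hcont2.continuousOn) ?_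
          intro s hs
          exact mul_le_mul_of_nonneg_left (ih s ⟨hs.1, hs.2.trans ht.2⟩) (hQ0 s)
        refine hmono.trans ?_
        have hsplit : (∫ s in (-Tm)..t,
              Q s * (Real.cosh (K s) + C * (K s)^(2*n) / (Nat.factorial (2*n) : ℝ)))
            = (∫ s in (-Tm)..t, Real.cosh (K s) * Q s)
              + (C / (Nat.factorial (2*n) : ℝ)) * ∫ s in (-Tm)..t, (K s)^(2*n) * Q s := by
          rw [← intervalIntegral.integral_const_mul, ← intervalIntegral.integral_add
            ((hQi.intervalIntegrable).continuousOn_mul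
              (g := fun s => Real.cosh (K s)) (Real.continuous_cosh.comp hKcont).continuousOn)
            (((hQi.intervalIntegrable).continuousOn_mul
              (g := fun s => K s ^ _) (hKcont.pow _).continuousOn).const_mul _)]
          apply intervalIntegral.integral_congr
          intro s _
          ring
        rw [hsplit]
        have h1 := hcosh t ht.1
        have h2 := hpow (2*n) t ht.1
        have h3 : (C / (Nat.factorial (2*n) : ℝ)) * ((K t)^(2*n+1)/(((2*n:ℕ):ℝ)+1))
            = C * (K t)^(2*n+1) / (Nat.factorial (2*n+1) : ℝ) := by
          have hF : ((Nat.factorial (2*n)):ℝ) ≠ 0 := hfactpos.ne'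
          have hd : (((2*n:ℕ):ℝ)+1) ≠ 0 := by positivity
          rw [Nat.factorial_succ, Nat.cast_mul, div_mul_div_comm,
            div_eq_div_iff (by positivity) (by positivity)]
          push_cast
          ring
        have h4 : (C / (Nat.factorial (2*n) : ℝ)) * (∫ s in (-Tm)..t, (K s)^(2*n) * Q s)
            ≤ (C / (Nat.factorial (2*n) : ℝ)) * ((K t)^(2*n+1)/(((2*n:ℕ):ℝ)+1)) :=
          mul_le_mul_of_nonneg_left h2 (div_nonneg hC0 hfactpos.le)
        rw [h3] at h4
        linarith
      intro t ht
      have hcont2 : Continuous fun s =>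
          Real.sinh (K s) + C * (K s)^(2*n+1) / (Nat.factorial (2*n+1) : ℝ) :=
        (Real.continuous_sinh.comp hKcont).add
          ((continuous_const.mul (hKcont.pow _)).div_const _)
      have hmono : ∫ s in (-Tm)..t, Q s * vt s
          ≤ ∫ s in (-Tm)..t,
              Q s * (Real.sinh (K s) + C * (K s)^(2*n+1) / (Nat.factorial (2*n+1) : ℝ)) := by
        refine intervalIntegral.integral_mono_on ht.1 (hQvt _ _)
          ((hQi.intervalIntegrable).mul_continuousOn hcont2.continuousOn) ?_
        intro s hs
        exact mul_le_mul_of_nonneg_left (hvn s ⟨hs.1, hs.2.trans ht.2⟩) (hQ0 s)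
      have hsplit : (∫ s in (-Tm)..t,
            Q s * (Real.sinh (K s) + C * (K s)^(2*n+1) / (Nat.factorial (2*n+1) : ℝ)))
          = (∫ s in (-Tm)..t, Real.sinh (K s) * Q s)
            + (C / (Nat.factorial (2*n+1) : ℝ)) * ∫ s in (-Tm)..t, (K s)^(2*n+1) * Q s := by
        rw [← intervalIntegral.integral_const_mul, ← intervalIntegral.integral_add
          ((hQi.intervalIntegrable).continuousOn_mul
            (g := fun s => Real.sinh (K s)) (Real.continuous_sinh.comp hKcont).continuousOn)
          (((hQi.intervalIntegrable).continuousOn_mul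
              (g := fun s => K s ^ _) (hKcont.pow _).continuousOn).const_mul _)]
        apply intervalIntegral.integral_congr
        intro s _
        ring
      have h1 := hsinh t ht.1
      have h2 := hpow (2*n+1) t ht.1
      have h3 : (C / (Nat.factorial (2*n+1) : ℝ)) * ((K t)^(2*n+1+1)/(((2*n+1:ℕ):ℝ)+1))
          = C * (K t)^(2*(n+1)) / (Nat.factorial (2*(n+1)) : ℝ) := by
        have he : 2*(n+1) = (2*n+1)+1 := by ring
        rw [he]
        rw [show ((Nat.factorial ((2*n+1)+1)) : ℝ)
            = (((2*n+1:ℕ):ℝ)+1) * ((Nat.factorial (2*n+1)) : ℝ) by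
          rw [Nat.factorial_succ]; push_cast; ring]
        rw [div_mul_div_comm, mul_comm ((((2*n+1:ℕ):ℝ))+1) (((Nat.factorial (2*n+1)):ℝ))]
      have h4 : (C / (Nat.factorial (2*n+1) : ℝ)) * (∫ s in (-Tm)..t, (K s)^(2*n+1) * Q s)
          ≤ (C / (Nat.factorial (2*n+1) : ℝ)) * ((K t)^(2*n+1+1)/(((2*n+1:ℕ):ℝ)+1)) :=
        mul_le_mul_of_nonneg_left h2 (div_nonneg hC0 hfactpos1.le)
      rw [h3] at h4
      calc ut t ≤ 1 + ∫ s in (-Tm)..t, Q s * vt s := hu t ht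
        _ ≤ 1 + ((∫ s in (-Tm)..t, Real.sinh (K s) * Q s)
            + (C / (Nat.factorial (2*n+1) : ℝ)) * ∫ s in (-Tm)..t, (K s)^(2*n+1) * Q s) := by
            rw [← hsplit]; linarith [hmono]
        _ ≤ Real.cosh (K t) + C * (K t)^(2*(n+1)) / (Nat.factorial (2*(n+1)) : ℝ) := by
            linarith
  -- pass to the limit
  have hulim : ∀ t ∈ Icc (-Tm) Tp, ut t ≤ Real.cosh (K t) := by
    intro t ht
    have h2 : Filter.Tendsto (fun n : ℕ => 2*n) Filter.atTop Filter.atTop :=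
      Filter.tendsto_atTop_mono (f := id) (fun n => by simp [id]; omega) Filter.tendsto_id
    have h3 := (FloorSemiring.tendsto_pow_div_factorial_atTop (K := ℝ) (K t)).comp h2
    have htend : Filter.Tendsto
        (fun n : ℕ => Real.cosh (K t) + C * (K t)^(2*n) / (Nat.factorial (2*n) : ℝ))
        Filter.atTop (nhds (Real.cosh (K t))) := by
      have h5 := (tendsto_const_nhds (x := Real.cosh (K t))
        (f := Filter.atTop (α := ℕ))).add ((tendsto_const_nhds (x := C)
          (f := Filter.atTop (α := ℕ))).mul h3)
      simp only [mul_zero, add_zero] at h5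
      convert h5 using 2 with n
      simp [Function.comp, mul_div_assoc]
    exact ge_of_tendsto' htend (fun n => claim n t ht)
  -- conclude
  have hTpI : Tp ∈ Icc (-Tm) Tp := right_mem_Icc.mpr haT
  have hvfinal : vt Tp ≤ Real.sinh (K Tp) := by
    refine (hv Tp hTpI).trans ?_
    calc ∫ s in (-Tm)..Tp, Q s * ut s ≤ ∫ s in (-Tm)..Tp, Real.cosh (K s) * Q s := by
          refine intervalIntegral.integral_mono_on haT (hQut _ _)
            ((hQi.intervalIntegrable).continuousOn_mul
              (g := fun s => Real.cosh (K s)) (Real.continuous_cosh.comp hKcont).continuousOn) ?_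
          intro s hs
          rw [mul_comm]
          exact mul_le_mul_of_nonneg_right (hulim s hs) (hQ0 s)
      _ ≤ Real.sinh (K Tp) := hcosh Tp haT
  have hKTp : K Tp = κ := by
    rw [hκ, hKdef, intervalIntegral.integral_of_le haT, ← integral_Icc_eq_integral_Ioc]
  rw [hKTp] at hvfinal
  have hBb : ‖B Tp‖ ≤ Real.sinh κ * Real.exp (2*m1*Tp + 2*m2*Tm) := by
    have h5 := mul_le_mul_of_nonneg_right hvfinal (Real.exp_pos (2*m1*Tp + 2*m2*Tm)).le
    calc ‖B Tp‖ = vt Tp * Real.exp (2*m1*Tp + 2*m2*Tm) := by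
          simp only [hvtdef]
          rw [mul_assoc, ← Real.exp_add,
            show (-(2*m1*Tp + 2*m2*Tm)) + (2*m1*Tp + 2*m2*Tm) = 0 by ring,
            Real.exp_zero, mul_one]
      _ ≤ Real.sinh κ * Real.exp (2*m1*Tp + 2*m2*Tm) := h5
  rw [hb]
  constructor
  · intro him
    have e1 : m1 = ζ.im := by rw [hm1def]; exact max_eq_left him
    have e2 : m2 = 0 := by rw [hm2def]; exact max_eq_right (by linarith)
    rw [e1, e2] at hBb
    calc ‖B Tp‖ ≤ Real.sinh κ * Real.exp (2*ζ.im*Tp + 2*0*Tm) := hBb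
      _ = Real.sinh κ * Real.exp (2*Tp*ζ.im) := by
          rw [show 2*ζ.im*Tp + 2*0*Tm = 2*Tp*ζ.im by ring]
  · intro him
    have e1 : m1 = 0 := by rw [hm1def]; exact max_eq_right him.le
    have e2 : m2 = -ζ.im := by rw [hm2def]; exact max_eq_left (by linarith)
    rw [e1, e2] at hBb
    calc ‖B Tp‖ ≤ Real.sinh κ * Real.exp (2*0*Tp + 2*(-ζ.im)*Tm) := hBb
      _ = Real.sinh κ * Real.exp (-(2*Tm*ζ.im)) := by
          rw [show 2*0*Tp + 2*(-ζ.im)*Tm = -(2*Tm*ζ.im) by ring]
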